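/- Let γ be an automorphism (without inversion) of a tree T sending an oriented edge e to a distinct oriented edge e', and suppose there is an oriented geodesic edge-path containing both e and e' with compatible orientations. Then γ has no fixed point in T (γ is hyperbolic), and its translation axis contains e and e'. -/

import Mathlib

open SimpleGraph

section Aux

variable {V : Type*} {G : SimpleGraph V}

/-- The walk along a sequence of successively adjacent vertices. -/
def segWalk (q : ℕ → V) (hq : ∀ m, G.Adj (q m) (q (m + 1))) : (k : ℕ) → G.Walk (q 0) (q k)
  | 0 => Walk.nil
  | (k + 1) => (segWalk q hq k).concat (hq k)

lemma segWalk_length (q : ℕ → V) (hq : ∀ m, G.Adj (q m) (q (m + 1))) (k : ℕ) :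
    (segWalk q hq k).length = k := by
  induction k with
  | zero => rfl
  | succ k ih => simp [segWalk, Walk.length_concat, ih]

lemma segWalk_support (q : ℕ → V) (hq : ∀ m, G.Adj (q m) (q (m + 1))) (k : ℕ) :
    (segWalk q hq k).support = (List.range (k + 1)).map q := by
  induction k with
  | zero => simp [segWalk, List.range_succ]
  | succ k ih =>
    rw [segWalk, Walk.support_concat, ih, List.range_succ (n := k + 1), List.map_append]
    simp

lemma segWalk_isPath (hA : G.IsAcyclic) (q : ℕ → V) (hq : ∀ m, G.Adj (q m) (q (m + 1)))
    (hnb : ∀ m, q m ≠ q (m + 2)) (k : ℕ) : (segWalk q hq k).IsPath := by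
  induction k with
  | zero => simp [segWalk]
  | succ k ih =>
    have hsupnd : ((List.range (k + 1)).map q).Nodup := by
      rw [← segWalk_support q hq k]; exact ih.support_nodup
    rw [Walk.isPath_def, segWalk_support, List.range_succ (n := k + 1), List.map_append,
      List.nodup_append]
    refine ⟨hsupnd, by simp, ?_⟩
    intro x hx y hy hx'
    simp only [List.map_cons, List.map_nil, List.mem_cons, List.not_mem_nil, or_false] at hy
    subst hy
    subst hx'
    obtain ⟨t, ht, hqt⟩ := by
      simpa only [List.mem_map, List.mem_range] using hx
    -- `q t = q (k+1)` with `t ≤ k`.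
    rcases eq_or_lt_of_le (Nat.lt_succ_iff.mp ht) with ht' | ht'
    · exact (hq k).ne (ht' ▸ hqt)
    -- now t < k; build two distinct paths from q t to q k
    · have hadj' : G.Adj (q t) (q k) := by
        rw [hqt]; exact (hq k).symm
      -- path 1 : along the sequence
      have hcast : t + (k - t) = k := by omega
      let W : G.Walk (q t) (q k) :=
        (segWalk (fun m => q (t + m)) (fun m => by
          have := hq (t + m); rwa [Nat.add_assoc] at this) (k - t)).copy rfl (by rw [hcast])
      have hWsup : W.support = ((List.range (k - t + 1)).map fun m => q (t + m)) := by
        simp only [W, Walk.support_copy]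
        exact segWalk_support _ _ _
      have hWpath : W.IsPath := by
        rw [Walk.isPath_def, hWsup]
        have hsub : List.Sublist ((List.range (k - t + 1)).map fun m => q (t + m))
            ((List.range (k + 1)).map q) := by
          have h0 : List.Sublist ((List.range (k - t + 1)).map (t + ·))
              (List.range (t + (k - t + 1))) := by
            conv_rhs => rw [List.range_add]
            exact List.sublist_append_right _ _
          have : List.Sublist ((List.range (k - t + 1)).map (t + ·)) (List.range (k + 1)) := by
            rwa [show t + (k - t + 1) = k + 1 by omega] at h0
          simpa [List.map_map, Function.comp_def] using this.map q
        exact hsupnd.sublist hsub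
      have hWlen : W.length = k - t := by
        simp only [W, Walk.length_copy]; exact segWalk_length _ _ _
      -- path 2 : the single edge
      let W₂ : G.Walk (q t) (q k) := Walk.cons hadj' Walk.nil
      have hW₂ : W₂.IsPath := by
        simp [W₂, Walk.isPath_def, hadj'.ne]
      have heq := hA.path_unique ⟨W, hWpath⟩ ⟨W₂, hW₂⟩
      have hlen : W.length = W₂.length :=
        congrArg (fun pp : G.Path (q t) (q k) => pp.val.length) heq
      have h1 : k - t = 1 := by
        rw [hWlen] at hlen; simpa [W₂] using hlen
      have htk : t = k - 1 := by omega
      have := hnb (k - 1)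
      rw [show k - 1 + 2 = k + 1 by omega] at this
      exact this (htk ▸ hqt)

lemma segWalk_dist (hT : G.IsTree) (q : ℕ → V) (hq : ∀ m, G.Adj (q m) (q (m + 1)))
    (hnb : ∀ m, q m ≠ q (m + 2)) (a k : ℕ) : G.dist (q a) (q (a + k)) = k := by
  have hq' : ∀ m, G.Adj (q (a + m)) (q (a + (m + 1))) := fun m => hq (a + m)
  have hnb' : ∀ m, q (a + m) ≠ q (a + (m + 2)) := fun m => hnb (a + m)
  have hp := segWalk_isPath hT.IsAcyclic (fun m => q (a + m)) hq' hnb' k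
  obtain ⟨R, hR, hlen⟩ := hT.isConnected.exists_path_of_dist (q (a + 0)) (q (a + k))
  have heq := hT.IsAcyclic.path_unique ⟨R, hR⟩ ⟨segWalk (fun m => q (a + m)) hq' k, hp⟩
  have hRlen : R.length = k := by
    have h := congrArg (fun pp : G.Path (q (a + 0)) (q (a + k)) => pp.val.length) heq
    simpa [segWalk_length] using h
  have hfin : G.dist (q (a + 0)) (q (a + k)) = k := by rw [← hlen, hRlen]
  exact hfin

lemma iso_dist (hc : G.Connected) (φ : G ≃g G) (u v : V) :
    G.dist (φ u) (φ v) = G.dist u v := by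
  have key : ∀ (ψ : G ≃g G) (u v : V), G.dist (ψ u) (ψ v) ≤ G.dist u v := by
    intro ψ u v
    obtain ⟨w, hw⟩ := hc.exists_walk_length_eq_dist u v
    calc G.dist (ψ u) (ψ v) ≤ (w.map ψ.toHom).length := SimpleGraph.dist_le _
      _ = w.length := Walk.length_map _ _
      _ = G.dist u v := hw
  refine le_antisymm (key φ u v) ?_
  have := key φ.symm (φ u) (φ v)
  simpa using this

end Aux

/-- If an automorphism `γ` of a tree sends the oriented edge
`(p i, p (i+1))` of a geodesic edge-path `p` to the distinct later oriented
edge `(p j, p (j+1))` of the same path (compatible orientations), then `γ`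
has no fixed point, and its translation axis (the set of minimally displaced
points) contains both edges. -/
theorem stmt_7 {V : Type*} (G : SimpleGraph V) (hT : G.IsTree)
    (γ : G ≃g G) (n : ℕ) (p : ℕ → V)
    (hgeo : ∀ a b : ℕ, a ≤ b → b ≤ n → G.dist (p a) (p b) = b - a)
    (hadj : ∀ i < n, G.Adj (p i) (p (i + 1)))
    (i j : ℕ) (hij : i < j) (hjn : j + 1 ≤ n)
    (he : γ (p i) = p j ∧ γ (p (i + 1)) = p (j + 1)) :
    (∀ x : V, γ x ≠ x) ∧
      ∀ x ∈ ({p i, p (i + 1), p j, p (j + 1)} : Set V),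
        G.dist x (γ x) = sInf (Set.range fun y : V => G.dist y (γ y)) := by
  have hc := hT.isConnected
  set f : V → V := ⇑γ with hf
  set ℓ : ℕ := j - i with hℓdef
  have hℓ : 0 < ℓ := by omega
  have hjiℓ : j = i + ℓ := by omega
  -- iterates of γ preserve distance and adjacency
  have hiterdist : ∀ (k : ℕ) (u v : V), G.dist (f^[k] u) (f^[k] v) = G.dist u v := by
    intro k
    induction k with
    | zero => simp
    | succ k ih =>
      intro u v
      rw [Function.iterate_succ_apply', Function.iterate_succ_apply']
      rw [iso_dist hc γ]; exact ih u v
  have hiteradj : ∀ (k : ℕ) {u v : V}, G.Adj u v → G.Adj (f^[k] u) (f^[k] v) := by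
    intro k
    induction k with
    | zero => intro u v h; simpa using h
    | succ k ih =>
      intro u v h
      rw [Function.iterate_succ_apply', Function.iterate_succ_apply']
      exact γ.map_adj_iff.mpr (ih h)
  have hfinj : Function.Injective f := γ.toEquiv.injective
  -- the bi-infinite (one-sided) geodesic sequence
  set q : ℕ → V := fun m => f^[m / ℓ] (p (i + m % ℓ)) with hq
  have hqid : ∀ k r : ℕ, r ≤ ℓ + 1 → q (k * ℓ + r) = f^[k] (p (i + r)) := by
    have base : ∀ k r : ℕ, r < ℓ → q (k * ℓ + r) = f^[k] (p (i + r)) := by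
      intro k r hr
      have hdiv : (k * ℓ + r) / ℓ = k := by
        rw [Nat.mul_comm, Nat.mul_add_div hℓ, Nat.div_eq_of_lt hr, Nat.add_zero]
      have hmod : (k * ℓ + r) % ℓ = r := by
        rw [Nat.mul_comm, Nat.mul_add_mod, Nat.mod_eq_of_lt hr]
      simp only [hq]
      rw [hdiv, hmod]
    have stepℓ : ∀ k : ℕ, q (k * ℓ + ℓ) = f^[k] (p (i + ℓ)) := by
      intro k
      have : k * ℓ + ℓ = (k + 1) * ℓ + 0 := by ring
      rw [this, base (k + 1) 0 hℓ]
      rw [Function.iterate_succ_apply, Nat.add_zero]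
      congr 1
      rw [show f (p i) = p j from he.1, hjiℓ]
    intro k r hr
    rcases lt_or_ge r ℓ with h | h
    · exact base k r h
    rcases eq_or_lt_of_le h with h' | h'
    · rw [← h']; exact stepℓ k
    · have hr' : r = ℓ + 1 := by omega
      subst hr'
      have h1 : k * ℓ + (ℓ + 1) = (k + 1) * ℓ + 1 := by ring
      have h2 : q ((k + 1) * ℓ + 1) = f^[k + 1] (p (i + 1)) := by
        rcases eq_or_lt_of_le (show 1 ≤ ℓ from hℓ) with hℓ1 | hℓ1
        · have h3 : (k + 1) * ℓ + 1 = (k + 1) * ℓ + ℓ := by rw [← hℓ1]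
          rw [h3, stepℓ (k + 1), ← hℓ1]
        · exact base (k + 1) 1 hℓ1
      rw [h1, h2, Function.iterate_succ_apply]
      congr 1
      rw [show f (p (i + 1)) = p (j + 1) from he.2, hjiℓ, Nat.add_assoc]
  -- adjacency and non-backtracking for q
  have hadjq : ∀ m, G.Adj (q m) (q (m + 1)) := by
    intro m
    have hm : m = (m / ℓ) * ℓ + m % ℓ := by
      rw [Nat.mul_comm]; exact (Nat.div_add_mod m ℓ).symm
    have hr : m % ℓ < ℓ := Nat.mod_lt _ hℓ
    rw [hm, show (m / ℓ) * ℓ + m % ℓ + 1 = (m / ℓ) * ℓ + (m % ℓ + 1) by ring,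
      hqid _ _ (by omega), hqid _ _ (by omega)]
    refine hiteradj _ ?_
    have : i + m % ℓ < n := by omega
    have := hadj _ this
    rwa [show i + m % ℓ + 1 = i + (m % ℓ + 1) by ring] at this
  have hnbq : ∀ m, q m ≠ q (m + 2) := by
    intro m
    have hm : m = (m / ℓ) * ℓ + m % ℓ := by
      rw [Nat.mul_comm]; exact (Nat.div_add_mod m ℓ).symm
    have hr : m % ℓ < ℓ := Nat.mod_lt _ hℓ
    rw [hm, show (m / ℓ) * ℓ + m % ℓ + 2 = (m / ℓ) * ℓ + (m % ℓ + 2) by ring,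
      hqid _ _ (by omega), hqid _ _ (by omega)]
    intro hcon
    have hpp : p (i + m % ℓ) = p (i + (m % ℓ + 2)) := hfinj.iterate (m / ℓ) hcon
    have hd : G.dist (p (i + m % ℓ)) (p (i + (m % ℓ + 2))) = 2 := by
      rw [hgeo _ _ (by omega) (by omega)]; omega
    rw [hpp, SimpleGraph.dist_self] at hd
    omega
  have hdistq : ∀ a k : ℕ, G.dist (q a) (q (a + k)) = k :=
    segWalk_dist hT q hadjq hnbq
  -- identify the four relevant points along q
  have hq0 : q 0 = p i := by
    have := hqid 0 0 (by omega); simpa using this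
  have hq1 : q 1 = p (i + 1) := by
    have := hqid 0 1 (by omega); simpa using this
  have hqℓ : q ℓ = p j := by
    have := hqid 1 0 (by omega)
    rw [show (1 : ℕ) * ℓ + 0 = ℓ by ring] at this
    rw [this]; simp [he.1]
  have hqℓ1 : q (ℓ + 1) = p (j + 1) := by
    have := hqid 1 1 (by omega)
    rw [show (1 : ℕ) * ℓ + 1 = ℓ + 1 by ring] at this
    rw [this]; simp [he.2]
  have hq2ℓ : q (ℓ + ℓ) = f (f (p i)) := by
    have := hqid 2 0 (by omega)
    rw [show (2 : ℕ) * ℓ + 0 = ℓ + ℓ by ring] at this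
    rw [this]; simp [Function.iterate_succ_apply', Nat.add_zero]
  have hq2ℓ1 : q (ℓ + 1 + ℓ) = f (f (p (i + 1))) := by
    have := hqid 2 1 (by omega)
    rw [show (2 : ℕ) * ℓ + 1 = ℓ + 1 + ℓ by ring] at this
    rw [this]; simp [Function.iterate_succ_apply']
  -- q is a geodesic, so dist (q 0) (q (k * ℓ)) = k * ℓ with endpoint f^[k] (p i)
  have hqkl : ∀ k : ℕ, q (k * ℓ) = f^[k] (p i) := by
    intro k
    have := hqid k 0 (by omega); simpa using this
  -- lower bound: every point is displaced by at least ℓ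
  have hlower : ∀ x : V, ℓ ≤ G.dist x (f x) := by
    intro x
    set d : ℕ := G.dist x (f x) with hd
    set D : ℕ := G.dist (p i) x with hD
    have hstep : ∀ k : ℕ, G.dist x (f^[k] x) ≤ k * d := by
      intro k
      induction k with
      | zero => simp
      | succ k ih =>
        calc G.dist x (f^[k + 1] x) ≤ G.dist x (f x) + G.dist (f x) (f^[k + 1] x) :=
              hc.dist_triangle
          _ = d + G.dist x (f^[k] x) := by
              rw [Function.iterate_succ_apply']
              congr 1
              exact iso_dist hc γ x (f^[k] x)
          _ ≤ d + k * d := by omega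
          _ = (k + 1) * d := by ring
    have hkey : ∀ k : ℕ, k * ℓ ≤ 2 * D + k * d := by
      intro k
      have h1 : G.dist (q 0) (q (0 + k * ℓ)) = k * ℓ := hdistq 0 (k * ℓ)
      rw [Nat.zero_add, hqkl, hq0] at h1
      have h2 : G.dist (p i) (f^[k] (p i)) ≤ G.dist (p i) x + G.dist x (f^[k] (p i)) :=
        hc.dist_triangle
      have h3 : G.dist x (f^[k] (p i)) ≤ G.dist x (f^[k] x) + G.dist (f^[k] x) (f^[k] (p i)) :=
        hc.dist_triangle
      have h4 : G.dist (f^[k] x) (f^[k] (p i)) = D := by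
        rw [hiterdist, SimpleGraph.dist_comm]
      have h5 := hstep k
      omega
    by_contra hcon
    push_neg at hcon
    have := hkey (2 * D + 1)
    have h6 : (2 * D + 1) * (d + 1) ≤ (2 * D + 1) * ℓ := by
      exact Nat.mul_le_mul_left _ (by omega)
    nlinarith
  -- displacements of the four points equal ℓ
  have hdpi : G.dist (p i) (f (p i)) = ℓ := by
    rw [he.1, hgeo i j (by omega) (by omega)]
  have hdpi1 : G.dist (p (i + 1)) (f (p (i + 1))) = ℓ := by
    rw [he.2, hgeo (i + 1) (j + 1) (by omega) (by omega)]; omega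
  have hdpj : G.dist (p j) (f (p j)) = ℓ := by
    have h : f (p j) = f (f (p i)) := by rw [← he.1]
    rw [h, ← hqℓ, ← hq2ℓ]
    exact hdistq ℓ ℓ
  have hdpj1 : G.dist (p (j + 1)) (f (p (j + 1))) = ℓ := by
    have h : f (p (j + 1)) = f (f (p (i + 1))) := by rw [← he.2]
    rw [h, ← hqℓ1, ← hq2ℓ1]
    exact hdistq (ℓ + 1) ℓ
  -- the infimum of displacements is ℓ
  have hsinf : sInf (Set.range fun y : V => G.dist y (f y)) = ℓ := by
    refine le_antisymm (Nat.sInf_le ⟨p i, hdpi⟩) ?_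
    refine le_csInf ⟨ℓ, ⟨p i, hdpi⟩⟩ ?_
    rintro s ⟨y, rfl⟩
    exact hlower y
  constructor
  · intro x hx
    have h0 : G.dist x (f x) = 0 := by rw [show f x = x from hx, SimpleGraph.dist_self]
    have := hlower x
    omega
  · intro x hx
    rw [hsinf]
    rcases hx with h | h | h | h
    · rw [h]; exact hdpi
    · rw [h]; exact hdpi1
    · rw [h]; exact hdpj
    · rw [h]; exact hdpj1
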